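/- Let ≡ be the congruence on the free monoid of finite sequences of positive integers generated by all shifted copies of the relations 1·1 ≡ 1, 1·2·1·2 ≡ 2·1·2·1 ≡ 2·1·2, and 1·i ≡ i·1 for i ≥ 3 (a shifted copy adds the same nonnegative constant to every entry of both sides). Then for every p ≥ 2 and every i with 1 ≤ i < p, one has δ_p ≡ δ_p·i and δ_p ≡ i·δ_p. -/

import Mathlib

namespace QN

variable {S A : Type*}

/-- A normalisation: a length-preserving map `N` on words over `S` fixing
length-one words and satisfying `N (u ++ N w ++ v) = N (u ++ w ++ v)`. -/
structure Normalisation (S : Type*) where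
  N : List S → List S
  length_eq : ∀ w : List S, (N w).length = w.length
  single : ∀ s : S, N [s] = [s]
  mid : ∀ u v w : List S, N (u ++ N w ++ v) = N (u ++ w ++ v)

/-- Extract the two entries of a length-two word (with a default fallback). -/
def pairOf : List S → S → S → S × S
  | [x, y], _, _ => (x, y)
  | _, s, t => (s, t)

/-- The restriction `N̄` of `N` to length-two words, as a map on pairs. -/
def nbar (N : List S → List S) (s t : S) : S × S :=
  pairOf (N [s, t]) s t

/-- Apply `f` to the length-two factor at (1-indexed) position `i`;
out-of-range positions act as the identity. -/
def applyAt (f : S → S → S × S) : ℕ → List S → List S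
  | 1, a :: b :: l => (f a b).1 :: (f a b).2 :: l
  | n + 2, a :: l => a :: applyAt f (n + 1) l
  | _, l => l

/-- `φ_u`: apply `φ` at the successive positions of `u`, leftmost entry of `u` first. -/
def applySeq (f : S → S → S × S) (u : List ℕ) (w : List S) : List S :=
  u.foldl (fun w i => applyAt f i w) w

/-- A word is `N`-normal iff all its length-two factors are `N`-normal. -/
def LocallyNormal (N : List S → List S) : Prop :=
  ∀ w : List S, N w = w ↔ ∀ u v : List S, ∀ s t : S, w = u ++ s :: t :: v → N [s, t] = [s, t]

/-- Every word is normalised by finitely many applications of `N̄` at positions. -/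
def NbarGenerated (N : List S → List S) : Prop :=
  ∀ w : List S, ∃ u : List ℕ, N w = applySeq (nbar N) u w

/-- A normalisation map is quadratic if it satisfies the two locality conditions. -/
def Quadratic (N : List S → List S) : Prop :=
  LocallyNormal N ∧ NbarGenerated N

/-- `e` is `N`-neutral: `N (w·e) = N (e·w) = N w · e`. -/
def Neutral (N : List S → List S) (e : S) : Prop :=
  ∀ w : List S, N (w ++ [e]) = N w ++ [e] ∧ N (e :: w) = N w ++ [e]

/-- The alternating sequence of length `m` starting with `k ∈ {1,2}`. -/
def altFrom : ℕ → ℕ → List ℕ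
  | _, 0 => []
  | k, n + 1 => k :: altFrom (3 - k) n

/-- `(S, N)` is of left-class `c`: `N = N̄_{α_c}` on length-three words. -/
def LeftClass (N : List S → List S) (c : ℕ) : Prop :=
  ∀ w : List S, w.length = 3 → N w = applySeq (nbar N) (altFrom 1 c) w

/-- `(S, N)` is of right-class `c`: `N = N̄_{ᾱ_c}` on length-three words. -/
def RightClass (N : List S → List S) (c : ℕ) : Prop :=
  ∀ w : List S, w.length = 3 → N w = applySeq (nbar N) (altFrom 2 c) w

/-- The domino rule is valid for `f`. -/
def DominoRule (f : S → S → S × S) : Prop :=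
  ∀ s₁ s₂ s₁' s₂' t₀ t₁ t₂ : S,
    f t₀ s₁ = (s₁', t₁) → f t₁ s₂ = (s₂', t₂) →
    f s₁ s₂ = (s₁, s₂) → f s₁' s₂' = (s₁', s₂')

/-- The sequences `δ_p`: `δ₁ = ε` and `δ_p = sh(δ_{p-1})·1·2·⋯·(p-1)`. -/
def delta : ℕ → List ℕ
  | 0 => []
  | 1 => []
  | p + 2 => (delta (p + 1)).map (· + 1) ++ List.range' 1 (p + 1)

/-- Apply `N` to the length-`k` factor beginning at (1-indexed) position `i`. -/
def applyFactorAt (N : List S → List S) (k : ℕ) : ℕ → List S → List S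
  | 0, w => w
  | i + 1, w => w.take i ++ N ((w.drop i).take k) ++ w.drop (i + k)

/-- Apply `N` to length-`k` factors at the successive positions of `u`. -/
def applyFactorSeq (N : List S → List S) (k : ℕ) (u : List ℕ) (w : List S) : List S :=
  u.foldl (fun w i => applyFactorAt N k i w) w

/-- One-step rewriting relation of a rewriting system `R`. -/
def RStep (R : List A → List A → Prop) (x y : List A) : Prop :=
  ∃ u v w w', R w w' ∧ x = u ++ w ++ v ∧ y = u ++ w' ++ v

/-- A rewriting system is terminating if it admits no infinite rewriting sequence. -/
def Terminating (R : List A → List A → Prop) : Prop :=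
  ¬ ∃ f : ℕ → List A, ∀ n, RStep R (f n) (f (n + 1))

/-- Confluence of a rewriting system. -/
def Confluent (R : List A → List A → Prop) : Prop :=
  ∀ w w₁ w₂ : List A, Relation.ReflTransGen (RStep R) w w₁ →
    Relation.ReflTransGen (RStep R) w w₂ →
    ∃ w', Relation.ReflTransGen (RStep R) w₁ w' ∧ Relation.ReflTransGen (RStep R) w₂ w'

/-- A word is `R`-normal if no rule of `R` applies to any of its factors. -/
def RNormal (R : List A → List A → Prop) (w : List A) : Prop :=
  ¬ ∃ w', RStep R w w'

/-- Every word rewrites to some `R`-normal word. -/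
def Normalising (R : List A → List A → Prop) : Prop :=
  ∀ w : List A, ∃ w', Relation.ReflTransGen (RStep R) w w' ∧ RNormal R w'

/-- A rewriting system is quadratic if all its rules relate length-two words. -/
def QuadraticRS (R : List A → List A → Prop) : Prop :=
  ∀ w w', R w w' → w.length = 2 ∧ w'.length = 2

/-- A rewriting system is reduced. -/
def ReducedRS (R : List A → List A → Prop) : Prop :=
  ∀ w w', R w w' → RNormal R w' ∧ RNormal (fun a b => R a b ∧ ¬(a = w ∧ b = w')) w

/-- The rewriting system associated with a quadratic normalisation:
one rule `s·t → N̄(s·t)` for each non-`N`-normal length-two word. -/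
def rules (N : List S → List S) : List S → List S → Prop :=
  fun w w' => ∃ s t : S, w = [s, t] ∧ w' = N [s, t] ∧ w' ≠ w

/-- `π_e`: delete all occurrences of `e`, landing in words over `S∖{e}`. -/
noncomputable def pie (e : S) (w : List S) : List {s : S // s ≠ e} :=
  w.filterMap fun s => @dite _ (s = e) (Classical.dec _) (fun _ => none) (fun h => some ⟨s, h⟩)

/-- The rewriting system `R_e` over `S∖{e}`. -/
def rulesE (N : List S → List S) (e : S) :
    List {s : S // s ≠ e} → List {s : S // s ≠ e} → Prop :=
  fun w w' => ∃ s t : {s : S // s ≠ e},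
    w = [s, t] ∧ N [s.1, t.1] ≠ [s.1, t.1] ∧ w' = pie e (N [s.1, t.1])

/-- `M` admits the monoid presentation `⟨S ∣ r⟩`. -/
def PresentedBy (M : Type*) [Monoid M] (S : Type*) (r : List S → List S → Prop) : Prop :=
  Nonempty ((conGen fun a b : FreeMonoid S => r a.toList b.toList).Quotient ≃* M)

/-- Left-divisibility in a monoid. -/
def LeftDvd {M : Type*} [Monoid M] (f g : M) : Prop :=
  ∃ g', f * g' = g

/-- The pair `s₁, s₂` is `S`-normal (greedy). -/
def SNormalPair {M : Type*} [Monoid M] (S : Set M) (s₁ s₂ : M) : Prop :=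
  ∀ s ∈ S, ∀ f : M, LeftDvd s (f * s₁ * s₂) → LeftDvd s (f * s₁)

/-- A word over `S` is `S`-normal if all its adjacent pairs are. -/
def SNormalWord {M : Type*} [Monoid M] (S : Set M) (w : List S) : Prop :=
  ∀ u v : List S, ∀ a b : S, w = u ++ a :: b :: v → SNormalPair S (a : M) (b : M)

end QN

open QN
/-- The base relations of the congruence `≡`: all shifted copies of `1·1 ≡ 1`,
`1·2·1·2 ≡ 2·1·2·1 ≡ 2·1·2` and `1·i ≡ i·1` for `i ≥ 3`. -/
inductive KBase : FreeMonoid ℕ → FreeMonoid ℕ → Prop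
  | idem (k : ℕ) : KBase (FreeMonoid.ofList [1 + k, 1 + k]) (FreeMonoid.ofList [1 + k])
  | braid₁ (k : ℕ) : KBase (FreeMonoid.ofList [1 + k, 2 + k, 1 + k, 2 + k])
      (FreeMonoid.ofList [2 + k, 1 + k, 2 + k, 1 + k])
  | braid₂ (k : ℕ) : KBase (FreeMonoid.ofList [2 + k, 1 + k, 2 + k, 1 + k])
      (FreeMonoid.ofList [2 + k, 1 + k, 2 + k])
  | comm (i k : ℕ) (h : 3 ≤ i) : KBase (FreeMonoid.ofList [1 + k, i + k])
      (FreeMonoid.ofList [i + k, 1 + k])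

section Statement13Aux

open List

/-- congruence on lists of naturals -/
def KK (a b : List ℕ) : Prop := conGen KBase (FreeMonoid.ofList a) (FreeMonoid.ofList b)

theorem kgen {a b : List ℕ} (h : KBase (FreeMonoid.ofList a) (FreeMonoid.ofList b)) : KK a b :=
  ConGen.Rel.of _ _ h

theorem krefl (a : List ℕ) : KK a a := ConGen.Rel.refl _

theorem krefl' {a b : List ℕ} (h : a = b) : KK a b := h ▸ krefl a

theorem ksymm {a b : List ℕ} (h : KK a b) : KK b a := ConGen.Rel.symm h

theorem ktrans {a b c : List ℕ} (h1 : KK a b) (h2 : KK b c) : KK a c := ConGen.Rel.trans h1 h2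

theorem kmul {a b c d : List ℕ} (h1 : KK a b) (h2 : KK c d) : KK (a ++ c) (b ++ d) :=
  ConGen.Rel.mul h1 h2

theorem kcongr (x y : List ℕ) {u v : List ℕ} (h : KK u v) :
    KK (x ++ u ++ y) (x ++ v ++ y) := by
  simpa [List.append_assoc] using kmul (kmul (krefl x) h) (krefl y)

theorem kshift {a b : List ℕ} (h : KK a b) : KK (a.map (· + 1)) (b.map (· + 1)) := by
  have key : ∀ x y : FreeMonoid ℕ, conGen KBase x y →
      conGen KBase (FreeMonoid.map (· + 1) x) (FreeMonoid.map (· + 1) y) := by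
    intro x y h
    induction h with
    | of x y hxy =>
      refine ConGen.Rel.of _ _ ?_
      cases hxy with
      | idem k => exact (by simpa [Nat.add_assoc] using KBase.idem (k + 1))
      | braid₁ k => exact (by simpa [Nat.add_assoc] using KBase.braid₁ (k + 1))
      | braid₂ k => exact (by simpa [Nat.add_assoc] using KBase.braid₂ (k + 1))
      | comm i k h3 => exact (by simpa [Nat.add_assoc] using KBase.comm i (k + 1) h3)
    | refl x => exact ConGen.Rel.refl _
    | symm _ ih => exact ConGen.Rel.symm ih
    | trans _ _ ih1 ih2 => exact ConGen.Rel.trans ih1 ih2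
    | mul _ _ ih1 ih2 =>
      have := ConGen.Rel.mul ih1 ih2
      rw [← map_mul, ← map_mul] at this
      exact this
  have := key _ _ h
  exact this

theorem kidem {a : ℕ} (ha : 1 ≤ a) : KK [a, a] [a] := by
  obtain ⟨k, rfl⟩ : ∃ k, a = 1 + k := ⟨a - 1, by omega⟩
  exact kgen (KBase.idem k)

theorem kbraid₁ {a : ℕ} (ha : 1 ≤ a) : KK [a, a + 1, a, a + 1] [a + 1, a, a + 1, a] := by
  obtain ⟨k, rfl⟩ : ∃ k, a = 1 + k := ⟨a - 1, by omega⟩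
  have := kgen (KBase.braid₁ k)
  simpa [show 1 + k + 1 = 2 + k by omega] using this

theorem kbraid₂ {a : ℕ} (ha : 1 ≤ a) : KK [a + 1, a, a + 1, a] [a + 1, a, a + 1] := by
  obtain ⟨k, rfl⟩ : ∃ k, a = 1 + k := ⟨a - 1, by omega⟩
  have := kgen (KBase.braid₂ k)
  simpa [show 1 + k + 1 = 2 + k by omega] using this

theorem kcasc {a : ℕ} (ha : 1 ≤ a) : KK [a, a + 1, a, a + 1] [a + 1, a, a + 1] :=
  ktrans (kbraid₁ ha) (kbraid₂ ha)

theorem kcomm {a b : ℕ} (ha : 1 ≤ a) (hab : a + 2 ≤ b) : KK [a, b] [b, a] := by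
  obtain ⟨k, rfl⟩ : ∃ k, a = 1 + k := ⟨a - 1, by omega⟩
  obtain ⟨i, hi, rfl⟩ : ∃ i, 3 ≤ i ∧ b = i + k := ⟨b - k, by omega, by omega⟩
  exact kgen (KBase.comm i k hi)

/-- move a letter from the front of a block to its back, provided it commutes
with each letter of the block -/
theorem kexch {a : ℕ} {u : List ℕ} (h : ∀ x ∈ u, KK [a, x] [x, a]) :
    KK (a :: u) (u ++ [a]) := by
  induction u with
  | nil => exact krefl _
  | cons b u ih =>
    have h1 : KK (a :: b :: u) (b :: a :: u) := by
      have := kcongr [] u (h b (by simp))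
      simpa using this
    refine ktrans h1 ?_
    have := kcongr [b] [] (ih fun x hx => h x (by simp [hx]))
    simpa using this

theorem kexch' {a : ℕ} {u : List ℕ} (h : ∀ x ∈ u, KK [a, x] [x, a]) :
    KK (u ++ [a]) (a :: u) := ksymm (kexch h)

/-- the word (a+1)·a·(a+2)·(a+1)·⋯·(a+m)·(a+m-1)·(a+m) -/
def riffle : ℕ → ℕ → List ℕ
  | a, 0 => [a]
  | a, m + 1 => (a + 1) :: a :: riffle (a + 1) m

/-- the word (a+1)·a·(a+1)·(a+2)·(a+1)·(a+2)·⋯·(a+m)·(a+m-1)·(a+m) -/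
def trip : ℕ → ℕ → List ℕ
  | _, 0 => []
  | a, m + 1 => (a + 1) :: a :: (a + 1) :: trip (a + 1) m

theorem range'_splitQN (s m n p t : ℕ) (h : p = m + n) (ht : t = s + m) :
    List.range' s p = List.range' s m ++ List.range' t n := by
  subst ht
  rw [show p = n + m by omega]
  rw [List.range'_append_1, Nat.add_comm]

theorem kriffle : ∀ (m a : ℕ), 1 ≤ a →
    KK (range' (a + 1) m ++ range' a (m + 1)) (riffle a m) := by
  intro m
  induction m with
  | zero => intro a ha; simp [riffle]; exact krefl _
  | succ m ih =>
    intro a ha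
    have e1 : range' (a + 1) (m + 1) ++ range' a (m + 2)
        = [a + 1] ++ (range' (a + 2) m ++ [a]) ++ range' (a + 1) (m + 1) := by
      simp [range'_succ, List.append_assoc]
    have c1 : KK (range' (a + 2) m ++ [a]) (a :: range' (a + 2) m) := by
      refine kexch' ?_
      intro x hx
      rw [mem_range'] at hx
      obtain ⟨i, _, rfl⟩ := hx
      exact kcomm ha (by omega)
    have step1 : KK (range' (a + 1) (m + 1) ++ range' a (m + 2))
        ([a + 1] ++ (a :: range' (a + 2) m) ++ range' (a + 1) (m + 1)) := by
      rw [e1]; exact kcongr [a + 1] (range' (a + 1) (m + 1)) c1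
    refine ktrans step1 ?_
    have e2 : [a + 1] ++ (a :: range' (a + 2) m) ++ range' (a + 1) (m + 1)
        = [a + 1, a] ++ (range' (a + 1 + 1) m ++ range' (a + 1) (m + 1)) ++ [] := by
      simp [range'_succ, List.append_assoc]
    rw [e2]
    have := kcongr [a + 1, a] [] (ih (a + 1) (by omega))
    simpa [riffle] using this

theorem ktrip : ∀ (m a : ℕ), KK (riffle a (m + 1)) (trip a (m + 1)) := by
  intro m
  induction m with
  | zero =>
    intro a
    exact krefl' (by simp [riffle, trip])
  | succ m ih =>
    intro a
    have h1 : KK (riffle a (m + 2)) ((a + 1) :: a :: trip (a + 1) (m + 1)) := by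
      have := kcongr [a + 1, a] [] (ih (a + 1))
      simpa [riffle] using this
    refine ktrans h1 ?_
    have e1 : (a + 1) :: a :: trip (a + 1) (m + 1)
        = [a + 1, a] ++ [a + 2, a + 1, a + 2] ++ trip (a + 2) m := by
      simp [trip]
    have e2 : trip a (m + 2)
        = [a + 1, a] ++ [a + 1, a + 2, a + 1, a + 2] ++ trip (a + 2) m := by
      simp [trip]
    rw [e1, e2]
    exact kcongr [a + 1, a] (trip (a + 2) m) (ksymm (kcasc (by omega)))

theorem delta_pos {p x : ℕ} (hx : x ∈ delta p) : 1 ≤ x := by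
  match p with
  | 0 => simp [delta] at hx
  | 1 => simp [delta] at hx
  | q + 2 =>
    simp only [delta, mem_append, mem_map] at hx
    rcases hx with ⟨y, _, rfl⟩ | hx
    · omega
    · rw [mem_range'] at hx; obtain ⟨i, _, rfl⟩ := hx; omega

theorem map_range'_add_one (s n : ℕ) : (range' s n).map (· + 1) = range' (s + 1) n := by
  have := map_add_range' (a := 1) s n 1
  simpa [Nat.add_comm] using this

/-- the structural claim: δ_{q+3} ≡ sh²(δ_{q+1}) · (2,1,2)(3,2,3)⋯ -/
theorem kdelta_trip (q : ℕ) :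
    KK (delta (q + 3)) ((delta (q + 1)).map (· + 2) ++ trip 1 (q + 1)) := by
  have e1 : delta (q + 3)
      = (delta (q + 1)).map (· + 2) ++ (range' 2 (q + 1) ++ range' 1 (q + 2)) ++ [] := by
    show (delta (q + 2)).map (· + 1) ++ range' 1 (q + 2) = _
    show ((delta (q + 1)).map (· + 1) ++ range' 1 (q + 1)).map (· + 1) ++ range' 1 (q + 2) = _
    rw [List.map_append, List.map_map, map_range'_add_one]
    rw [show ((fun x => x + 1) ∘ fun x => x + 1) = (fun x => x + 2) by funext x; simp only [Function.comp]]
    simp [List.append_assoc]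
  rw [e1]
  have h1 := kcongr ((delta (q + 1)).map (· + 2)) []
      (ktrans (kriffle (q + 1) 1 le_rfl) (ktrip q 1))
  simpa using h1

/-- absorption of 1 on the left -/
theorem kone (q : ℕ) : KK (1 :: delta (q + 3)) (delta (q + 3)) := by
  set T := (delta (q + 1)).map (· + 2) with hT
  have h1 : KK (1 :: delta (q + 3)) (1 :: (T ++ trip 1 (q + 1))) := by
    have := kcongr [1] [] (kdelta_trip q)
    simpa using this
  have h2 : KK (1 :: (T ++ trip 1 (q + 1))) (T ++ 1 :: trip 1 (q + 1)) := by
    have c : KK (1 :: T) (T ++ [1]) := by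
      refine kexch ?_
      intro x hx
      rw [hT, mem_map] at hx
      obtain ⟨y, hy, rfl⟩ := hx
      exact kcomm le_rfl (by have := delta_pos hy; omega)
    have := kcongr [] (trip 1 (q + 1)) c
    simpa [List.append_assoc] using this
  have h3 : KK (T ++ 1 :: trip 1 (q + 1)) (T ++ trip 1 (q + 1)) := by
    have e : T ++ 1 :: trip 1 (q + 1) = T ++ [1, 2, 1, 2] ++ trip 2 q := by
      simp [trip]
    have e2 : T ++ trip 1 (q + 1) = T ++ [2, 1, 2] ++ trip 2 q := by
      simp [trip]
    rw [e, e2]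
    exact kcongr T (trip 2 q) (kcasc le_rfl)
  exact ktrans h1 (ktrans h2 (ktrans h3 (ksymm (kdelta_trip q))))

/-- right absorption -/
theorem kR : ∀ p, 2 ≤ p → ∀ i, 1 ≤ i → i < p → KK (delta p ++ [i]) (delta p) := by
  intro p hp
  induction p, hp using Nat.le_induction with
  | base =>
    intro i hi1 hip
    have : i = 1 := by omega
    subst this
    exact kidem le_rfl
  | succ p hp ih =>
    intro i hi1 hip
    have hd : delta (p + 1) = (delta p).map (· + 1) ++ range' 1 p := by
      obtain ⟨k, rfl⟩ : ∃ k, p = k + 1 := ⟨p - 1, by omega⟩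
      rfl
    set D := (delta p).map (· + 1) with hD
    -- insertion/removal of i+1 after D, for 1 ≤ i < p
    have hins : ∀ j, 1 ≤ j → j < p → KK (D ++ [j + 1]) D := by
      intro j hj1 hjp
      have := kshift (ih j hj1 hjp)
      simpa using this
    by_cases hip' : i = p
    · -- use idempotency of the last letter
      subst hip'
      have e : delta (i + 1) ++ [i] = (D ++ range' 1 (i - 1)) ++ [i, i] ++ [] := by
        rw [hd]
        have : range' 1 i = range' 1 (i - 1) ++ [i] := by
          rw [range'_splitQN 1 (i - 1) 1 i i (by omega) (by omega)]
          simp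
        rw [this]; simp
      have e2 : delta (i + 1) = (D ++ range' 1 (i - 1)) ++ [i] ++ [] := by
        rw [hd]
        have : range' 1 i = range' 1 (i - 1) ++ [i] := by
          rw [range'_splitQN 1 (i - 1) 1 i i (by omega) (by omega)]
          simp
        rw [this]; simp
      rw [e, e2]
      exact kcongr _ [] (kidem hi1)
    · have hip2 : i < p := by omega
      obtain ⟨s, hs⟩ : ∃ s, p = i + 1 + s := ⟨p - i - 1, by omega⟩
      have hr1 : range' 1 p = range' 1 (i + 1) ++ range' (i + 2) s := by
        rw [hs]; exact range'_splitQN 1 (i + 1) s (i + 1 + s) (i + 2) (by omega) (by omega)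
      have hr2 : range' 1 (i + 1) = range' 1 (i - 1) ++ [i, i + 1] := by
        rw [range'_splitQN 1 (i - 1) 2 (i + 1) i (by omega) (by omega)]
        simp [range'_succ]
      -- commutation of i with the letters of range' (i+2) s
      have hcommi : ∀ x ∈ range' (i + 2) s, KK [i, x] [x, i] := by
        intro x hx
        rw [mem_range'] at hx
        obtain ⟨t, _, rfl⟩ := hx
        exact kcomm hi1 (by omega)
      -- commutation of i+1 with the letters of range' 1 (i-1)
      have hcommi1 : ∀ x ∈ range' 1 (i - 1), KK [i + 1, x] [x, i + 1] := by
        intro x hx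
        rw [mem_range'] at hx
        obtain ⟨t, ht, rfl⟩ := hx
        exact ksymm (kcomm (by omega) (by omega))
      -- the chain
      have w0 : delta (p + 1) ++ [i]
          = (D ++ range' 1 (i + 1)) ++ (range' (i + 2) s ++ [i]) ++ [] := by
        rw [hd, hr1]; simp [List.append_assoc]
      have step1 : KK (delta (p + 1) ++ [i])
          ((D ++ range' 1 (i + 1)) ++ (i :: range' (i + 2) s) ++ []) := by
        rw [w0]; exact kcongr _ [] (kexch' hcommi)
      have step2 : KK ((D ++ range' 1 (i + 1)) ++ (i :: range' (i + 2) s) ++ [])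
          (((D ++ [i + 1]) ++ range' 1 (i + 1)) ++ (i :: range' (i + 2) s) ++ []) := by
        have : KK (D ++ []) (D ++ [i + 1]) := by
          simpa using ksymm (hins i hi1 hip2)
        have h := kcongr [] (range' 1 (i + 1) ++ (i :: range' (i + 2) s) ++ []) this
        refine ktrans (krefl' ?_) (ktrans h (krefl' ?_)) <;> simp [List.append_assoc]
      have step3 : KK (((D ++ [i + 1]) ++ range' 1 (i + 1)) ++ (i :: range' (i + 2) s) ++ [])
          ((D ++ range' 1 (i - 1)) ++ [i + 1, i, i + 1, i] ++ range' (i + 2) s) := by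
        have h := kcongr D ([i, i + 1] ++ (i :: range' (i + 2) s))
          (ksymm (kexch' hcommi1))
        refine ktrans (krefl' ?_) (ktrans h (krefl' ?_))
        · rw [hr2]; simp [List.append_assoc]
        · simp [List.append_assoc]
      have step4 : KK ((D ++ range' 1 (i - 1)) ++ [i + 1, i, i + 1, i] ++ range' (i + 2) s)
          ((D ++ range' 1 (i - 1)) ++ [i + 1, i, i + 1] ++ range' (i + 2) s) :=
        kcongr _ _ (kbraid₂ hi1)
      have step5 : KK ((D ++ range' 1 (i - 1)) ++ [i + 1, i, i + 1] ++ range' (i + 2) s)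
          ((D ++ [i + 1]) ++ (range' 1 (i - 1) ++ [i, i + 1] ++ range' (i + 2) s)) := by
        have h := kcongr D ([i, i + 1] ++ range' (i + 2) s) (kexch' hcommi1)
        refine ktrans (krefl' ?_) (ktrans h (krefl' ?_)) <;> simp [List.append_assoc]
      have step6 : KK ((D ++ [i + 1]) ++ (range' 1 (i - 1) ++ [i, i + 1] ++ range' (i + 2) s))
          (delta (p + 1)) := by
        have h := kcongr [] (range' 1 (i - 1) ++ [i, i + 1] ++ range' (i + 2) s)
          (hins i hi1 hip2)
        refine ktrans (krefl' ?_) (ktrans h (krefl' ?_))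
        · simp [List.append_assoc]
        · rw [hd, hr1, hr2]; simp [List.append_assoc]
      exact ktrans step1 (ktrans step2 (ktrans step3 (ktrans step4 (ktrans step5 step6))))

/-- left absorption -/
theorem kL : ∀ p, 2 ≤ p → ∀ i, 1 ≤ i → i < p → KK (i :: delta p) (delta p) := by
  intro p hp
  induction p, hp using Nat.le_induction with
  | base =>
    intro i hi1 hip
    have : i = 1 := by omega
    subst this
    exact kidem le_rfl
  | succ p hp ih =>
    intro i hi1 hip
    by_cases hi : i = 1
    · subst hi
      obtain ⟨q, rfl⟩ : ∃ q, p = q + 2 := ⟨p - 2, by omega⟩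
      exact kone q
    · have hd : delta (p + 1) = (delta p).map (· + 1) ++ range' 1 p := by
        obtain ⟨k, rfl⟩ : ∃ k, p = k + 1 := ⟨p - 1, by omega⟩
        rfl
      have h := kshift (ih (i - 1) (by omega) (by omega))

      have e : (((i - 1) :: delta p).map (· + 1)) = i :: (delta p).map (· + 1) := by
        simp; omega
      rw [e] at h
      have := kcongr [] (range' 1 p) (ktrans h (krefl _))
      rw [hd]
      simpa [List.append_assoc] using this

end Statement13Aux
/-- For every `p ≥ 2` and `1 ≤ i < p`, one has `δ_p ≡ δ_p·i` and
`δ_p ≡ i·δ_p`, where `≡` is the congruence generated by `KBase`. -/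
theorem statement13 (p : ℕ) (hp : 2 ≤ p) (i : ℕ) (hi1 : 1 ≤ i) (hip : i < p) :
    conGen KBase (FreeMonoid.ofList (delta p)) (FreeMonoid.ofList (delta p ++ [i])) ∧
    conGen KBase (FreeMonoid.ofList (delta p)) (FreeMonoid.ofList (i :: delta p)) := by
  exact ⟨ksymm (kR p hp i hi1 hip), ksymm (kL p hp i hi1 hip)⟩
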